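/- Let G be a bi-directed graph and G̅ an ancestral graph with the same skeleton as G. Then G and G̅ are Markov equivalent (i.e., the m-separation relations of G and G̅ coincide) if and only if G̅ satisfies the boundary containment property. -/

import Mathlib

/-- Possible edge types between an ordered pair of distinct vertices of a
simple mixed graph.  `arrowTo` at `(v, w)` means `v → w`, `arrowFrom` means
`v ← w`, `undir` means `v − w` and `bidir` means `v ↔ w`. -/
inductive EType : Type
  | none | undir | arrowTo | arrowFrom | bidir
deriving DecidableEq

/-- The edge type seen from the reversed ordered pair of vertices. -/
def EType.mirror : EType → EType
  | .none => .none
  | .undir => .undir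
  | .arrowTo => .arrowFrom
  | .arrowFrom => .arrowTo
  | .bidir => .bidir

/-- A simple mixed graph: at most one edge (undirected, directed or
bi-directed) between any two distinct vertices, and no self loops. -/
structure MixedGraph (V : Type) where
  E : V → V → EType
  no_loop : ∀ v, E v v = .none
  symm : ∀ v w, E w v = (E v w).mirror

/-- `(a, b, c)` are three consecutive vertices on the path `p`. -/
def ConsecTriple {V : Type} (p : List V) (a b c : V) : Prop :=
  ∃ l1 l2, p = l1 ++ a :: b :: c :: l2

namespace MixedGraph

variable {V : Type} (G : MixedGraph V)

/-- `v − w` is an edge of `G`. -/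
def Undir (v w : V) : Prop := G.E v w = .undir

/-- `v → w` is an edge of `G`. -/
def Dir (v w : V) : Prop := G.E v w = .arrowTo

/-- `v ↔ w` is an edge of `G`. -/
def Bidir (v w : V) : Prop := G.E v w = .bidir

/-- `v` and `w` are adjacent (joined by some edge). -/
def Adj (v w : V) : Prop := G.E v w ≠ .none

/-- The edge between `a` and `b` has an arrowhead at `b`. -/
def HeadAt (a b : V) : Prop := G.E a b = .arrowTo ∨ G.E a b = .bidir

/-- Closed boundary: `v` together with its adjacent vertices. -/
def Bd (v : V) : Set V := insert v {w | G.Adj v w}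

/-- A set of vertices is complete if all of its pairs of distinct
vertices are adjacent. -/
def Complete (S : Set V) : Prop := ∀ v ∈ S, ∀ w ∈ S, v ≠ w → G.Adj v w

/-- A vertex is simplicial if its closed boundary is complete. -/
def Simplicial (v : V) : Prop := G.Complete (G.Bd v)

/-- `v` is an ancestor of `w`: `v = w` or there is a directed path from
`v` to `w`. -/
def Anc (v w : V) : Prop := Relation.ReflTransGen G.Dir v w

/-- The set of ancestors of vertices in `C`. -/
def anSet (C : Set V) : Set V := {v | ∃ c ∈ C, G.Anc v c}

/-- `G` is an ancestral graph. -/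
def Ancestral : Prop :=
  (∀ v w, G.Dir v w → ¬ G.Anc w v) ∧
  (∀ v w, G.Undir v w → ∀ u, ¬ G.HeadAt u v) ∧
  (∀ v w, G.Bidir v w → ¬ G.Anc v w)

/-- The boundary containment property. -/
def BdContain : Prop :=
  (∀ v w, G.Undir v w → G.Bd v = G.Bd w) ∧
  (∀ v w, G.Dir v w → G.Bd v ⊆ G.Bd w)

/-- `b` is a collider between consecutive neighbours `a` and `c`. -/
def Collider (a b c : V) : Prop := G.HeadAt a b ∧ G.HeadAt c b

/-- A path: a list of distinct vertices, consecutive ones adjacent. -/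
def IsPath (p : List V) : Prop := p.Nodup ∧ p.Chain' G.Adj

/-- `p` is an m-connecting path given `C`: every non-collider on it is
outside `C` and every collider on it is an ancestor of `C`. -/
def IsMConnPath (C : Set V) (p : List V) : Prop :=
  G.IsPath p ∧
  ∀ a b c, ConsecTriple p a b c →
    (G.Collider a b c → b ∈ G.anSet C) ∧ (¬ G.Collider a b c → b ∉ C)

/-- `v` and `w` are m-connected given `C`. -/
def MConn (v w : V) (C : Set V) : Prop :=
  ∃ p, G.IsMConnPath C p ∧ p.head? = some v ∧ p.getLast? = some w

/-- `v` and `w` are m-separated given `C`. -/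
def MSep (v w : V) (C : Set V) : Prop := ¬ G.MConn v w C

/-- A maximal (ancestral) graph: every pair of distinct non-adjacent
vertices is m-separated given some set. -/
def Maximal : Prop :=
  ∀ v w, v ≠ w → ¬ G.Adj v w → ∃ C : Set V, v ∉ C ∧ w ∉ C ∧ G.MSep v w C

/-- `G` is a bi-directed graph. -/
def Bidirected : Prop := ∀ v w, G.E v w = .none ∨ G.E v w = .bidir

/-- `G` is an undirected graph. -/
def UndirectedG : Prop := ∀ v w, G.E v w = .none ∨ G.E v w = .undir

/-- `G` is a directed acyclic graph. -/
def IsDAG : Prop :=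
  (∀ v w, G.E v w = .none ∨ G.E v w = .arrowTo ∨ G.E v w = .arrowFrom) ∧
  (∀ v w, G.Dir v w → ¬ G.Anc w v)

/-- `G` and `H` have the same skeleton. -/
def SameSkeleton (H : MixedGraph V) : Prop := ∀ v w, G.Adj v w ↔ H.Adj v w

/-- `G` and `H` are Markov equivalent: their m-separation relations
coincide. -/
def MarkovEquiv (H : MixedGraph V) : Prop :=
  ∀ v w (C : Set V), v ≠ w → v ∉ C → w ∉ C → (G.MSep v w C ↔ H.MSep v w C)

open Classical in
/-- The edge map obtained from `G` by dropping all arrowheads at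
simplicial vertices. -/
noncomputable def dropE (v w : V) : EType :=
  match G.E v w with
  | .none => .none
  | .undir => .undir
  | .arrowTo => if G.Simplicial w then .undir else .arrowTo
  | .arrowFrom => if G.Simplicial v then .undir else .arrowFrom
  | .bidir =>
      if G.Simplicial v then (if G.Simplicial w then .undir else .arrowTo)
      else (if G.Simplicial w then .arrowFrom else .bidir)

/-- The graph obtained from `G` by dropping all arrowheads at simplicial
vertices; for a bi-directed graph `G` this is the simplicial graph `Gˢ`. -/
noncomputable def drop : MixedGraph V where
  E := G.dropE
  no_loop v := by simp [dropE, G.no_loop]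
  symm v w := by
    unfold dropE
    rw [G.symm v w]
    cases h : G.E v w <;>
      simp only [EType.mirror] <;> split_ifs <;> simp_all [EType.mirror]

open Classical in
/-- The edge map of the minimally oriented graph `G^min_<`: starting from
the simplicial graph, each bi-directed edge `v ↔ w` with `Bd v ⊆ Bd w`
and `v < w` is replaced by `v → w`. -/
noncomputable def gminE [LinearOrder V] (v w : V) : EType :=
  match G.dropE v w with
  | .bidir =>
      if G.Bd v ⊆ G.Bd w ∧ v < w then .arrowTo
      else if G.Bd w ⊆ G.Bd v ∧ w < v then .arrowFrom
      else .bidir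
  | e => e

/-- The graph `G^min_<` produced by Algorithm 4.2 from `G` and the total
order on `V`. -/
noncomputable def gmin [LinearOrder V] : MixedGraph V where
  E := G.gminE
  no_loop v := by
    have h := G.drop.no_loop v
    simp only [drop] at h
    simp [gminE, h]
  symm v w := by
    have h := G.drop.symm v w
    simp only [drop] at h
    unfold gminE
    rw [h]
    cases hE : G.dropE v w <;> simp only [EType.mirror]
    case bidir =>
      by_cases c1 : G.Bd v ⊆ G.Bd w ∧ v < w
      · have c2 : ¬ (G.Bd w ⊆ G.Bd v ∧ w < v) := fun h' => lt_asymm c1.2 h'.2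
        simp [c1, c2, EType.mirror]
      · by_cases c2 : G.Bd w ⊆ G.Bd v ∧ w < v
        · simp [c1, c2, EType.mirror]
        · simp [c1, c2, EType.mirror]

/-- Total number of arrowheads of `G`: the number of directed edges plus
twice the number of bi-directed edges. -/
noncomputable def arr : ℕ :=
  {p : V × V | G.Dir p.1 p.2}.ncard + {p : V × V | G.Bidir p.1 p.2}.ncard

end MixedGraph

/-- `Gm` is a minimally oriented graph for `G`. -/
def MinOriented {V : Type} (G Gm : MixedGraph V) : Prop :=
  Gm.Ancestral ∧ Gm.Maximal ∧ G.MarkovEquiv Gm ∧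
  ∀ H : MixedGraph V, H.Ancestral → H.Maximal → G.MarkovEquiv H → Gm.arr ≤ H.arr

section Aux

open List

variable {V : Type}

namespace MixedGraph

lemma adj_symm (G : MixedGraph V) {v w : V} (h : G.Adj v w) : G.Adj w v := by
  unfold Adj at *
  rw [G.symm]
  cases hE : G.E v w <;> simp [EType.mirror, hE] at h ⊢

lemma mem_bd {G : MixedGraph V} {u v : V} : u ∈ G.Bd v ↔ u = v ∨ G.Adj v u := by
  simp [Bd]

lemma adj_mem_bd (G : MixedGraph V) {u v : V} (h : G.Adj v u) : u ∈ G.Bd v :=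
  mem_bd.mpr (Or.inr h)

lemma self_mem_bd (G : MixedGraph V) (v : V) : v ∈ G.Bd v := mem_bd.mpr (Or.inl rfl)

lemma undir_symm (G : MixedGraph V) {v w : V} (h : G.Undir v w) : G.Undir w v := by
  unfold Undir at *; rw [G.symm, h]; rfl

lemma bidir_symm (G : MixedGraph V) {v w : V} (h : G.Bidir v w) : G.Bidir w v := by
  unfold Bidir at *; rw [G.symm, h]; rfl

lemma undir_adj (G : MixedGraph V) {v w : V} (h : G.Undir v w) : G.Adj v w := by
  unfold Undir Adj at *; simp [h]

lemma dir_adj (G : MixedGraph V) {v w : V} (h : G.Dir v w) : G.Adj v w := by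
  unfold Dir Adj at *; simp [h]

lemma adj_ne (G : MixedGraph V) {v w : V} (h : G.Adj v w) : v ≠ w := by
  rintro rfl; exact h (G.no_loop v)

/-- If there is a tail at `b` on the edge between `a` and `b`, then `Bd b ⊆ Bd a`. -/
lemma tail_bd {Gb : MixedGraph V} (hbc : Gb.BdContain) {a b : V}
    (hadj : Gb.Adj a b) (ht : ¬ Gb.HeadAt a b) : Gb.Bd b ⊆ Gb.Bd a := by
  unfold Adj HeadAt at *
  push_neg at ht
  cases hE : Gb.E a b
  · exact absurd hE hadj
  · exact (hbc.1 b a (by unfold Undir; rw [Gb.symm, hE]; rfl)).le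
  · exact absurd hE ht.1
  · exact hbc.2 b a (by unfold Dir; rw [Gb.symm, hE]; rfl)
  · exact absurd hE ht.2

lemma anc_bd {Gb : MixedGraph V} (hbc : Gb.BdContain) {v w : V} (h : Gb.Anc v w) :
    Gb.Bd v ⊆ Gb.Bd w := by
  induction h with
  | refl => exact subset_rfl
  | tail _ hdir ih => exact ih.trans (hbc.2 _ _ hdir)

lemma bidir_anc {G : MixedGraph V} (hG : G.Bidirected) {v w : V} : G.Anc v w ↔ v = w := by
  constructor
  · intro h
    induction h with
    | refl => rfl
    | @tail b c _ hdir ih =>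
      rcases hG b c with h' | h' <;> unfold Dir at hdir <;> simp [h'] at hdir
  · rintro rfl; exact Relation.ReflTransGen.refl

lemma bidir_of_adj {G : MixedGraph V} (hG : G.Bidirected) {v w : V} (h : G.Adj v w) :
    G.E v w = .bidir := (hG v w).resolve_left h

end MixedGraph

end Aux
section Aux2

open List

variable {V : Type}

lemma mem_of_getLast?' {l : List V} {w : V} (h : l.getLast? = some w) : w ∈ l := by
  induction l with
  | nil => simp at h
  | cons a t ih =>
    cases t with
    | nil => simp_all
    | cons b t' =>
      rw [List.getLast?_cons_cons] at h
      exact List.mem_cons_of_mem _ (ih h)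

lemma getLast?_cons_ne {a : V} {t : List V} (h : t ≠ []) : (a :: t).getLast? = t.getLast? := by
  cases t with
  | nil => simp at h
  | cons b t' => exact List.getLast?_cons_cons

lemma getLast?_append_ne {l m : List V} (h : m ≠ []) : (l ++ m).getLast? = m.getLast? := by
  rw [List.getLast?_append]
  cases m with
  | nil => simp at h
  | cons b t' =>
    rw [List.getLast?_eq_getLast (by simp)]
    rfl

lemma head?_append_cons (l : List V) (x : V) (t t' : List V) :
    (l ++ x :: t).head? = (l ++ x :: t').head? := by cases l <;> simp

lemma consecTriple_cons {u : V} {l : List V} {x y z : V} :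
    ConsecTriple (u :: l) x y z ↔ (u = x ∧ ∃ l2, l = y :: z :: l2) ∨ ConsecTriple l x y z := by
  constructor
  · rintro ⟨l1, l2, h⟩
    cases l1 with
    | nil =>
      simp only [List.nil_append, List.cons.injEq] at h
      exact Or.inl ⟨h.1, l2, h.2⟩
    | cons a l1' =>
      simp only [List.cons_append, List.cons.injEq] at h
      exact Or.inr ⟨l1', l2, h.2⟩
  · rintro (⟨rfl, l2, rfl⟩ | ⟨l1, l2, rfl⟩)
    exacts [⟨[], l2, rfl⟩, ⟨u :: l1, l2, rfl⟩]

lemma consecTriple_three {u v w a b c : V} (h : ConsecTriple [u, v, w] a b c) :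
    a = u ∧ b = v ∧ c = w := by
  obtain ⟨l1, l2, h⟩ := h
  have hlen := congrArg List.length h
  simp at hlen
  cases l1 with
  | nil => simp_all
  | cons x l1' => simp at hlen; omega

lemma chain'_suffix_append {R : V → V → Prop} {l1 l2 : List V}
    (h : List.Chain' R (l1 ++ l2)) : List.Chain' R l2 :=
  (List.isChain_append.mp h).2.1

lemma chain'_shortcut {R : V → V → Prop} {l1 l2 : List V} {a b c : V}
    (h : List.Chain' R (l1 ++ a :: b :: c :: l2)) (hac : R a c) :
    List.Chain' R (l1 ++ a :: c :: l2) := by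
  simp only [List.Chain'] at h ⊢
  rw [List.isChain_append] at h ⊢
  refine ⟨h.1, ?_, ?_⟩
  · rw [List.isChain_cons_cons]
    exact ⟨hac, (List.isChain_cons_cons.mp (List.isChain_cons_cons.mp h.2.1).2).2⟩
  · intro x hx y hy
    exact h.2.2 x hx y (by simpa using hy)

lemma shortcut_sublist (l1 l2 : List V) (a b c : V) :
    (l1 ++ a :: c :: l2) <+ (l1 ++ a :: b :: c :: l2) :=
  (List.Sublist.cons₂ a (List.sublist_cons_self b (c :: l2))).append_left l1

lemma interior_ne {l1 l2 : List V} {x y z v w : V}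
    (hnd : (l1 ++ x :: y :: z :: l2).Nodup)
    (hh : (l1 ++ x :: y :: z :: l2).head? = some v)
    (hl : (l1 ++ x :: y :: z :: l2).getLast? = some w) : y ≠ v ∧ y ≠ w := by
  constructor
  · cases l1 with
    | nil =>
      simp only [List.nil_append, List.head?_cons, Option.some.injEq] at hh
      subst hh
      simp only [List.nil_append, List.nodup_cons] at hnd
      exact fun h => hnd.1 (h ▸ List.mem_cons_self)
    | cons a l1' =>
      simp only [List.cons_append, List.head?_cons, Option.some.injEq] at hh
      subst hh
      simp only [List.cons_append, List.nodup_cons] at hnd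
      intro h
      exact hnd.1 (h ▸ (by simp : y ∈ l1' ++ x :: y :: z :: l2))
  · have hdec : l1 ++ x :: y :: z :: l2 = (l1 ++ [x]) ++ y :: z :: l2 := by simp
    rw [hdec] at hnd hl
    have hnd2 : (y :: z :: l2).Nodup :=
      List.Nodup.sublist (List.sublist_append_right _ _) hnd
    rw [getLast?_append_ne (by simp), List.getLast?_cons_cons] at hl
    have hw : w ∈ z :: l2 := mem_of_getLast?' hl
    rw [List.nodup_cons] at hnd2
    exact fun h => hnd2.1 (h ▸ hw)

lemma walk_dedup {R : V → V → Prop} :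
    ∀ n (p : List V), p.length ≤ n → p.Chain' R → p ≠ [] →
    ∃ q : List V, q ≠ [] ∧ q.Nodup ∧ q.Chain' R ∧ q.head? = p.head? ∧
      q.getLast? = p.getLast? ∧ ∀ x ∈ q, x ∈ p := by
  intro n
  induction n with
  | zero => intro p hlen _ hne; cases p <;> simp_all
  | succ n ih =>
    intro p hlen hch hne
    cases p with
    | nil => simp at hne
    | cons a t =>
      by_cases ha : a ∈ t
      · obtain ⟨s, u, rfl⟩ := List.append_of_mem ha
        have hsuf : (a :: u) <:+ (a :: (s ++ a :: u)) := ⟨a :: s, by simp⟩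
        obtain ⟨q, hq1, hq2, hq3, hq4, hq5, hq6⟩ :=
          ih (a :: u) (by simp at hlen ⊢; omega) (hch.suffix hsuf) (by simp)
        refine ⟨q, hq1, hq2, hq3, by simpa using hq4, ?_, ?_⟩
        · rw [hq5]
          have : a :: (s ++ a :: u) = (a :: s) ++ a :: u := by simp
          rw [this, getLast?_append_ne (by simp)]
        · intro x hx
          exact (hsuf.subset) (hq6 x hx)
      · cases t with
        | nil => exact ⟨[a], by simp, by simp, List.isChain_singleton _, rfl, rfl, by simp⟩
        | cons b t' =>
          obtain ⟨q, hq1, hq2, hq3, hq4, hq5, hq6⟩ :=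
            ih (b :: t') (by simp at hlen ⊢; omega) (List.isChain_cons_cons.mp hch).2 (by simp)
          refine ⟨a :: q, by simp, ?_, ?_, rfl, ?_, ?_⟩
          · rw [List.nodup_cons]
            exact ⟨fun h => ha (hq6 a h), hq2⟩
          · simp only [List.Chain']; rw [List.isChain_cons]
            refine ⟨fun y hy => ?_, hq3⟩
            rw [hq4] at hy
            simp at hy
            exact hy ▸ (List.isChain_cons_cons.mp hch).1
          · rw [getLast?_cons_ne hq1, hq5, List.getLast?_cons_cons]
          · intro x hx
            rcases List.mem_cons.mp hx with rfl | hx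
            · exact List.mem_cons_self
            · exact List.mem_cons_of_mem _ (hq6 x hx)

end Aux2
section Aux3

open List MixedGraph

variable {V : Type}

lemma isMConnPath_cons {Gb : MixedGraph V} {C : Set V} {u : V} {l : List V}
    (h : Gb.IsMConnPath C (u :: l)) : Gb.IsMConnPath C l := by
  refine ⟨⟨h.1.1.of_cons, h.1.2.tail⟩, fun a b c ht => ?_⟩
  exact h.2 a b c (consecTriple_cons.mpr (Or.inr ht))

lemma mem_anSet_of_mem {Gb : MixedGraph V} {C : Set V} {b : V} (h : b ∈ C) :
    b ∈ Gb.anSet C := ⟨b, h, Relation.ReflTransGen.refl⟩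

/-- Key Lemma 1: a path in the skeleton whose interior lies in `C` yields
m-connection in an ancestral graph with the boundary containment property. -/
lemma pathIn_mconn {Gb : MixedGraph V} (hGb : Gb.Ancestral) (hbc : Gb.BdContain)
    {v w : V} {C : Set V} :
    ∀ n (p : List V), p.length ≤ n → p.Nodup → p.Chain' Gb.Adj →
      p.head? = some v → p.getLast? = some w →
      (∀ x ∈ p, x = v ∨ x = w ∨ x ∈ C) → Gb.MConn v w C := by
  intro n
  induction n with
  | zero => intro p hlen _ _ hh _ _; cases p <;> simp_all
  | succ n ih =>
    intro p hlen hnd hch hh hl hmem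
    by_cases hall : ∀ a b c, ConsecTriple p a b c → Gb.Collider a b c
    · refine ⟨p, ⟨⟨hnd, hch⟩, fun a b c ht => ?_⟩, hh, hl⟩
      refine ⟨fun _ => ?_, fun hn => absurd (hall a b c ht) hn⟩
      obtain ⟨l1, l2, rfl⟩ := ht
      have hne := interior_ne hnd hh hl
      have hbmem : b ∈ l1 ++ a :: b :: c :: l2 := by simp
      rcases hmem b hbmem with h1 | h1 | h1
      · exact absurd h1 hne.1
      · exact absurd h1 hne.2
      · exact mem_anSet_of_mem h1
    · push_neg at hall
      obtain ⟨a, b, c, ht, hnc⟩ := hall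
      obtain ⟨l1, l2, rfl⟩ := ht
      have hsuf : (a :: b :: c :: l2) <:+ (l1 ++ a :: b :: c :: l2) := ⟨l1, rfl⟩
      have hch3 := hch.suffix hsuf
      have hab : Gb.Adj a b := (List.isChain_cons_cons.mp hch3).1
      have hbc' : Gb.Adj b c := (List.isChain_cons_cons.mp (List.isChain_cons_cons.mp hch3).2).1
      have hnd3 : (a :: b :: c :: l2).Nodup := hnd.sublist hsuf.sublist
      have hac_ne : a ≠ c := by
        simp only [List.nodup_cons] at hnd3
        exact fun h => hnd3.1 (h ▸ (by simp : c ∈ b :: c :: l2))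
      -- b has a tail on one side, so a and c are adjacent
      have hadj_ac : Gb.Adj a c := by
        rcases not_and_or.mp hnc with hna | hnc'
        · have hsub := tail_bd hbc hab hna
          have : c ∈ Gb.Bd a := hsub (Gb.adj_mem_bd hbc')
          rcases mem_bd.mp this with h | h
          · exact absurd h.symm hac_ne
          · exact h
        · have hsub := tail_bd hbc (Gb.adj_symm hbc') hnc'
          have : a ∈ Gb.Bd c := hsub (Gb.adj_mem_bd (Gb.adj_symm hab))
          rcases mem_bd.mp this with h | h
          · exact absurd h hac_ne
          · exact Gb.adj_symm h
      refine ih (l1 ++ a :: c :: l2) ?_ ?_ ?_ ?_ ?_ ?_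
      · simp at hlen ⊢; omega
      · exact hnd.sublist (shortcut_sublist l1 l2 a b c)
      · exact chain'_shortcut hch hadj_ac
      · rw [← hh]; exact head?_append_cons l1 a (c :: l2) (b :: c :: l2)
      · rw [← hl]
        have h1 : l1 ++ a :: c :: l2 = (l1 ++ [a]) ++ c :: l2 := by simp
        have h2 : l1 ++ a :: b :: c :: l2 = (l1 ++ [a, b]) ++ c :: l2 := by simp
        rw [h1, h2, getLast?_append_ne (by simp), getLast?_append_ne (by simp)]
      · intro x hx
        exact hmem x ((shortcut_sublist l1 l2 a b c).subset hx)

lemma collider_G_of {G : MixedGraph V} (hG : G.Bidirected) {l1 l2 : List V} {a b c : V}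
    (hch : List.Chain' G.Adj (l1 ++ a :: b :: c :: l2)) : G.Collider a b c := by
  have hsuf : (a :: b :: c :: l2) <:+ (l1 ++ a :: b :: c :: l2) := ⟨l1, rfl⟩
  have hch3 := hch.suffix hsuf
  have hab : G.Adj a b := (List.isChain_cons_cons.mp hch3).1
  have hbc' : G.Adj b c := (List.isChain_cons_cons.mp (List.isChain_cons_cons.mp hch3).2).1
  exact ⟨Or.inr (bidir_of_adj hG hab), Or.inr (bidir_of_adj hG (G.adj_symm hbc'))⟩

/-- In a bi-directed graph, non-adjacent distinct vertices are m-separated by `∅`. -/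
lemma msep_G_empty {G : MixedGraph V} (hG : G.Bidirected) {u w : V}
    (hne : u ≠ w) (hnadj : ¬ G.Adj u w) : G.MSep u w ∅ := by
  rintro ⟨p, ⟨⟨hnd, hch⟩, htr⟩, hh, hl⟩
  match p, hh with
  | [x], hh =>
    simp at hh hl
    exact hne (hh ▸ hl ▸ rfl)
  | [x, y], hh =>
    simp at hh hl
    subst hh; subst hl
    exact hnadj (List.isChain_cons_cons.mp hch).1
  | (x :: y :: z :: t), hh =>
    have := (htr x y z ⟨[], t, rfl⟩).1 (collider_G_of hG (l1 := []) hch)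
    obtain ⟨c0, hc0, -⟩ := this
    exact hc0

/-- A non-collider triangle certificate distinguishing `G` from `Gb`. -/
lemma distinguish {G Gb : MixedGraph V} (hME : G.MarkovEquiv Gb) (hG : G.Bidirected)
    (hsk : G.SameSkeleton Gb) {u v w : V} (hvw : Gb.Adj v w) (hvu : Gb.Adj v u)
    (huw : u ≠ w) (hnadj : ¬ Gb.Adj u w)
    (hncol : ¬ (Gb.HeadAt u v ∧ Gb.HeadAt w v)) : False := by
  have huv : u ≠ v := fun h => hnadj (h ▸ hvw)
  have hvw_ne : v ≠ w := Gb.adj_ne hvw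
  have hmconn : Gb.MConn u w ∅ := by
    refine ⟨[u, v, w], ⟨⟨by simp [huv, huw, hvw_ne, Ne.symm huv], ?_⟩, ?_⟩, by simp, by simp⟩
    · simp only [List.Chain']; rw [List.isChain_cons_cons]
      exact ⟨Gb.adj_symm hvu, List.isChain_pair.mpr hvw⟩
    · intro a b c ht
      obtain ⟨rfl, rfl, rfl⟩ := consecTriple_three ht
      exact ⟨fun hcol => absurd hcol hncol, fun _ => Set.notMem_empty _⟩
  have hnadjG : ¬ G.Adj u w := fun h => hnadj ((hsk u w).mp h)
  have hsep := msep_G_empty hG huw hnadjG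
  exact ((hME u w ∅ huw (Set.notMem_empty u) (Set.notMem_empty w)).mp hsep) hmconn

end Aux3
section Aux4

open List MixedGraph

variable {V : Type}

lemma prepend_walk {Gb : MixedGraph V} {C : Set V} {v b w : V} {q : List V}
    (hadj : Gb.Adj v b) (hbC : b ∈ C) (hq1 : q ≠ []) (hq2 : q.Chain' Gb.Adj)
    (hq3 : q.head? = some b) (hq4 : q.getLast? = some w)
    (hq5 : ∀ x ∈ q, x = b ∨ x = w ∨ x ∈ C) :
    ∃ q' : List V, q' ≠ [] ∧ q'.Chain' Gb.Adj ∧ q'.head? = some v ∧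
      q'.getLast? = some w ∧ ∀ x ∈ q', x = v ∨ x = w ∨ x ∈ C := by
  refine ⟨v :: q, by simp, ?_, by simp, ?_, ?_⟩
  · simp only [List.Chain']; rw [List.isChain_cons]
    refine ⟨fun y hy => ?_, hq2⟩
    rw [hq3] at hy
    simp at hy
    exact hy ▸ hadj
  · rw [getLast?_cons_ne hq1]; exact hq4
  · intro x hx
    rcases List.mem_cons.mp hx with rfl | hx
    · exact Or.inl rfl
    · rcases hq5 x hx with rfl | h | h
      · exact Or.inr (Or.inr hbC)
      · exact Or.inr (Or.inl h)
      · exact Or.inr (Or.inr h)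

/-- Key Lemma 2: an m-connecting path in an ancestral graph with the boundary
containment property yields a walk whose interior lies in `C`. -/
lemma mconn_goodwalk {Gb : MixedGraph V} (hGb : Gb.Ancestral) (hbc : Gb.BdContain)
    {C : Set V} :
    ∀ n (p : List V), p.length ≤ n → Gb.IsMConnPath C p →
      ∀ v w, p.head? = some v → p.getLast? = some w →
      ∃ q : List V, q ≠ [] ∧ q.Chain' Gb.Adj ∧ q.head? = some v ∧
        q.getLast? = some w ∧ ∀ x ∈ q, x = v ∨ x = w ∨ x ∈ C := by
  intro n
  induction n with
  | zero => intro p hlen _ v w hh _; cases p <;> simp_all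
  | succ n ih =>
    intro p hlen hp v w hh hl
    cases p with
    | nil => simp at hh
    | cons x t =>
      have hxv : x = v := by simpa using hh
      subst hxv
      cases t with
      | nil =>
        exact ⟨[x], by simp, List.isChain_singleton _, by simp, hl, fun y hy => Or.inl (by simpa using hy)⟩
      | cons b t2 =>
        cases t2 with
        | nil =>
          have hbw : b = w := by simpa using hl
          subst hbw
          exact ⟨[x, b], by simp, hp.1.2, by simp, by simp, by
            intro y hy
            rcases (by simpa using hy : y = x ∨ y = b) with rfl | rfl
            · exact Or.inl rfl
            · exact Or.inr (Or.inl rfl)⟩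
        | cons c rest =>
          -- p = x :: b :: c :: rest,  x plays the role of v
          have hlen' : (b :: c :: rest).length ≤ n := by simp at hlen ⊢; omega
          have hsufp : Gb.IsMConnPath C (b :: c :: rest) := isMConnPath_cons hp
          have hlb : (b :: c :: rest).getLast? = some w := by
            rw [← List.getLast?_cons_cons (a := x)]; exact hl
          have hadj_vb : Gb.Adj x b := (List.isChain_cons_cons.mp hp.1.2).1
          have hadj_bc : Gb.Adj b c :=
            (List.isChain_cons_cons.mp (List.isChain_cons_cons.mp hp.1.2).2).1
          have hnd := hp.1.1
          have hwb : w ≠ b := by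
            have hw : w ∈ c :: rest := by
              refine mem_of_getLast?' (l := c :: rest) ?_
              rw [← List.getLast?_cons_cons (a := b)]; exact hlb
            have : b ∉ c :: rest := by
              have := (List.nodup_cons.mp (List.nodup_cons.mp hnd).2).1
              exact this
            exact fun h => this (h ▸ hw)
          by_cases hbC : b ∈ C
          · obtain ⟨q, hq1, hq2, hq3, hq4, hq5⟩ :=
              ih (b :: c :: rest) hlen' hsufp b w rfl hlb
            exact prepend_walk hadj_vb hbC hq1 hq2 hq3 hq4 hq5
          · by_cases hcol : Gb.Collider x b c
            · -- collider surgery: replace b by an element of C it is an ancestor of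
              have hbAn : b ∈ Gb.anSet C := (hp.2 x b c ⟨[], rest, rfl⟩).1 hcol
              obtain ⟨c', hc'C, hanc⟩ := hbAn
              have hbd : Gb.Bd b ⊆ Gb.Bd c' := anc_bd hbc hanc
              obtain ⟨q0, hq01, hq02, hq03, hq04, hq05⟩ :=
                ih (b :: c :: rest) hlen' hsufp b w rfl hlb
              obtain ⟨q, hq1, hqnd, hqch, hqh, hqlast, hqsub⟩ :=
                walk_dedup q0.length q0 le_rfl hq02 hq01
              rw [hq03] at hqh
              rw [hq04] at hqlast
              obtain ⟨t, rfl⟩ : ∃ t, q = b :: t := by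
                cases q with
                | nil => simp at hqh
                | cons y t =>
                  have hyb : y = b := by simpa using hqh
                  subst hyb
                  exact ⟨t, rfl⟩
              have htne : t ≠ [] := by
                rintro rfl
                have hbw2 : b = w := by simpa using hqlast
                exact hwb hbw2.symm
              obtain ⟨y, t', rfl⟩ : ∃ y t', t = y :: t' := by
                cases t with
                | nil => exact absurd rfl htne
                | cons y t' => exact ⟨y, t', rfl⟩
              have hby : Gb.Adj b y := (List.isChain_cons_cons.mp hqch).1
              have hyBd : y ∈ Gb.Bd c' := hbd (Gb.adj_mem_bd hby)
              have hvBd : x ∈ Gb.Bd c' := hbd (Gb.adj_mem_bd (Gb.adj_symm hadj_vb))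
              have hmemT : ∀ z ∈ y :: t', z = w ∨ z ∈ C := by
                intro z hz
                have hzq : z ∈ b :: y :: t' := List.mem_cons_of_mem _ hz
                rcases hq05 z (hqsub z hzq) with rfl | h | h
                · exact absurd hz (List.nodup_cons.mp hqnd).1
                · exact Or.inl h
                · exact Or.inr h
              have hlast_t : (y :: t').getLast? = some w := by
                rw [← List.getLast?_cons_cons (a := b)]; exact hqlast
              have hchT : (y :: t').Chain' Gb.Adj := (List.isChain_cons_cons.mp hqch).2
              rcases mem_bd.mp hvBd with hvc' | hvc'
              · rcases mem_bd.mp hyBd with hyc' | hyc'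
                · -- y = c' = x : use y :: t'
                  refine ⟨y :: t', by simp, hchT, by rw [hyc', ← hvc']; rfl, hlast_t, ?_⟩
                  intro z hz
                  rcases hmemT z hz with h | h
                  · exact Or.inr (Or.inl h)
                  · exact Or.inr (Or.inr h)
                · -- x = c', Adj c' y : use x :: y :: t'
                  refine ⟨x :: y :: t', by simp,
                    List.isChain_cons_cons.mpr ⟨hvc' ▸ hyc', hchT⟩, by simp, ?_, ?_⟩
                  · rw [List.getLast?_cons_cons]; exact hlast_t
                  · intro z hz
                    rcases List.mem_cons.mp hz with rfl | hz
                    · exact Or.inl rfl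
                    · rcases hmemT z hz with h | h
                      · exact Or.inr (Or.inl h)
                      · exact Or.inr (Or.inr h)
              · rcases mem_bd.mp hyBd with hyc' | hyc'
                · -- y = c', Adj c' x : use x :: y :: t'
                  refine ⟨x :: y :: t', by simp,
                    List.isChain_cons_cons.mpr ⟨Gb.adj_symm (hyc' ▸ hvc'), hchT⟩, by simp, ?_, ?_⟩
                  · rw [List.getLast?_cons_cons]; exact hlast_t
                  · intro z hz
                    rcases List.mem_cons.mp hz with rfl | hz
                    · exact Or.inl rfl
                    · rcases hmemT z hz with h | h
                      · exact Or.inr (Or.inl h)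
                      · exact Or.inr (Or.inr h)
                · -- Adj c' x, Adj c' y : use x :: c' :: y :: t'
                  refine ⟨x :: c' :: y :: t', by simp,
                    List.isChain_cons_cons.mpr ⟨Gb.adj_symm hvc',
                      List.isChain_cons_cons.mpr ⟨hyc', hchT⟩⟩, by simp, ?_, ?_⟩
                  · rw [List.getLast?_cons_cons, List.getLast?_cons_cons]; exact hlast_t
                  · intro z hz
                    rcases List.mem_cons.mp hz with rfl | hz
                    · exact Or.inl rfl
                    rcases List.mem_cons.mp hz with rfl | hz
                    · exact Or.inr (Or.inr hc'C)
                    rcases hmemT z hz with h | h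
                    · exact Or.inr (Or.inl h)
                    · exact Or.inr (Or.inr h)
            · -- b is a non-collider (and b ∉ C): shortcut b
              have hvC_notmem : x ∉ b :: c :: rest := (List.nodup_cons.mp hnd).1
              have hadj_vc : Gb.Adj x c := by
                rcases not_and_or.mp hcol with hna | hnc'
                · have hsub := tail_bd hbc hadj_vb hna
                  rcases mem_bd.mp (hsub (Gb.adj_mem_bd hadj_bc)) with h | h
                  · exact absurd (h ▸ (by simp : c ∈ b :: c :: rest))
                      (h ▸ hvC_notmem)
                  · exact h
                · have hsub := tail_bd hbc (Gb.adj_symm hadj_bc) hnc'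
                  rcases mem_bd.mp (hsub (Gb.adj_mem_bd (Gb.adj_symm hadj_vb))) with h | h
                  · exact absurd (by simp : c ∈ b :: c :: rest) (h ▸ hvC_notmem)
                  · exact Gb.adj_symm h
              cases rest with
              | nil =>
                have hcw : c = w := by simpa using hl
                subst hcw
                refine ⟨[x, c], by simp, List.isChain_pair.mpr hadj_vc, by simp, by simp, ?_⟩
                intro z hz
                rcases (by simpa using hz : z = x ∨ z = c) with rfl | rfl
                · exact Or.inl rfl
                · exact Or.inr (Or.inl rfl)
              | cons d rest2 =>
                by_cases hcC : c ∈ C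
                · have hsufp2 : Gb.IsMConnPath C (c :: d :: rest2) := isMConnPath_cons hsufp
                  have hlc : (c :: d :: rest2).getLast? = some w := by
                    rw [← List.getLast?_cons_cons (a := b)]; exact hlb
                  obtain ⟨q, hq1, hq2, hq3, hq4, hq5⟩ :=
                    ih (c :: d :: rest2) (by simp at hlen ⊢; omega) hsufp2 c w rfl hlc
                  exact prepend_walk hadj_vc hcC hq1 hq2 hq3 hq4 hq5
                · -- the shortcut path x :: c :: d :: rest2 is m-connecting
                  have hq'path : Gb.IsMConnPath C (x :: c :: d :: rest2) := by
                    refine ⟨⟨?_, ?_⟩, ?_⟩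
                    · have h1 := List.nodup_cons.mp hnd
                      have h2 := List.nodup_cons.mp h1.2
                      rw [List.nodup_cons]
                      refine ⟨fun h => h1.1 (List.mem_cons_of_mem _ h), h2.2⟩
                    · simp only [List.Chain']; rw [List.isChain_cons_cons]
                      exact ⟨hadj_vc, (List.isChain_cons_cons.mp hsufp.1.2).2⟩
                    · intro a1 b1 c1 ht
                      rcases consecTriple_cons.mp ht with ⟨hva, l2', heq⟩ | ht'
                      · injection heq with h1 h2
                        injection h2 with h3 h4
                        subst h1
                        subst h3
                        subst hva
                        constructor
                        · intro hcol2
                          by_cases hbcd : Gb.Collider b c d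
                          · exact (hp.2 b c d ⟨[x], rest2, rfl⟩).1 hbcd
                          · exfalso
                            have hnbc : ¬ Gb.HeadAt b c := fun h => hbcd ⟨h, hcol2.2⟩
                            cases hE : Gb.E b c with
                            | none => exact hadj_bc hE
                            | undir =>
                              exact hGb.2.1 c b (Gb.undir_symm hE) d hcol2.2
                            | arrowTo => exact hnbc (Or.inl hE)
                            | bidir => exact hnbc (Or.inr hE)
                            | arrowFrom =>
                              have hdir_cb : Gb.Dir c b := by
                                unfold MixedGraph.Dir; rw [Gb.symm, hE]; rfl
                              have hheadcb : Gb.HeadAt c b := Or.inl hdir_cb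
                              have hnvb : ¬ Gb.HeadAt x b := fun h => hcol ⟨h, hheadcb⟩
                              cases hE2 : Gb.E x b with
                              | none => exact hadj_vb hE2
                              | undir =>
                                exact hGb.2.1 b x (Gb.undir_symm hE2) c hheadcb
                              | arrowTo => exact hnvb (Or.inl hE2)
                              | bidir => exact hnvb (Or.inr hE2)
                              | arrowFrom =>
                                have hdir_bv : Gb.Dir b x := by
                                  unfold MixedGraph.Dir; rw [Gb.symm, hE2]; rfl
                                have hanc_cv : Gb.Anc c x :=
                                  Relation.ReflTransGen.head hdir_cb
                                    (Relation.ReflTransGen.single hdir_bv)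
                                rcases hcol2.1 with hvc | hvc
                                · exact hGb.1 x c hvc hanc_cv
                                · exact hGb.2.2 c x (Gb.bidir_symm hvc) hanc_cv
                        · intro _; exact hcC
                      · exact hp.2 _ _ _ (consecTriple_cons.mpr (Or.inr
                          (consecTriple_cons.mpr (Or.inr ht'))))
                  refine ih (x :: c :: d :: rest2) (by simp at hlen ⊢; omega)
                    hq'path x w rfl ?_
                  rw [List.getLast?_cons_cons]
                  rw [← List.getLast?_cons_cons (a := b), ← List.getLast?_cons_cons (a := x)]
                  exact hl

end Aux4
section Aux5

open List MixedGraph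

variable {V : Type}

lemma mem_split_triple :
    ∀ (p : List V) (x v w : V), x ∈ p → p.head? = some v → p.getLast? = some w →
      x = v ∨ x = w ∨ ∃ a c, ConsecTriple p a x c := by
  intro p
  induction p with
  | nil => intro x v w hx; simp at hx
  | cons u t ih =>
    intro x v w hx hh hl
    have huv : u = v := by simpa using hh
    subst huv
    rcases List.mem_cons.mp hx with rfl | hxt
    · exact Or.inl rfl
    cases t with
    | nil => simp at hxt
    | cons b t' =>
      have hl' : (b :: t').getLast? = some w := by
        rw [← List.getLast?_cons_cons (a := u)]; exact hl
      rcases ih x b w hxt rfl hl' with rfl | h | ⟨a, c, l1, l2, heq⟩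
      · cases t' with
        | nil => exact Or.inr (Or.inl (by simpa using hl'))
        | cons d t'' => exact Or.inr (Or.inr ⟨u, d, [], t'', rfl⟩)
      · exact Or.inr (Or.inl h)
      · exact Or.inr (Or.inr ⟨a, c, u :: l1, l2, by rw [heq]; rfl⟩)

/-- m-connection transfers from the bi-directed graph to the ancestral graph. -/
lemma mconn_G_to_Gb {G Gb : MixedGraph V} (hG : G.Bidirected) (hGb : Gb.Ancestral)
    (hbc : Gb.BdContain) (hsk : G.SameSkeleton Gb) {v w : V} {C : Set V}
    (h : G.MConn v w C) : Gb.MConn v w C := by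
  obtain ⟨p, ⟨⟨hnd, hch⟩, htr⟩, hh, hl⟩ := h
  have hmem : ∀ x ∈ p, x = v ∨ x = w ∨ x ∈ C := by
    intro x hx
    rcases mem_split_triple p x v w hx hh hl with h1 | h1 | ⟨a, c, ht⟩
    · exact Or.inl h1
    · exact Or.inr (Or.inl h1)
    · refine Or.inr (Or.inr ?_)
      obtain ⟨l1, l2, rfl⟩ := ht
      have hcolG : G.Collider a x c := collider_G_of hG hch
      have := (htr a x c ⟨l1, l2, rfl⟩).1 hcolG
      obtain ⟨c0, hc0, hanc⟩ := this
      exact (bidir_anc hG).mp hanc ▸ hc0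
  have hchb : p.Chain' Gb.Adj := hch.imp (fun {a b} h => (hsk a b).mp h)
  exact pathIn_mconn hGb hbc p.length p le_rfl hnd hchb hh hl hmem

/-- m-connection transfers from the ancestral graph to the bi-directed graph. -/
lemma mconn_Gb_to_G {G Gb : MixedGraph V} (hG : G.Bidirected) (hGb : Gb.Ancestral)
    (hbc : Gb.BdContain) (hsk : G.SameSkeleton Gb) {v w : V} {C : Set V}
    (h : Gb.MConn v w C) : G.MConn v w C := by
  obtain ⟨p, hmc, hh, hl⟩ := h
  obtain ⟨q0, hq01, hq02, hq03, hq04, hq05⟩ :=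
    mconn_goodwalk hGb hbc p.length p le_rfl hmc v w hh hl
  obtain ⟨q, hq1, hqnd, hqch, hqh, hqlast, hqsub⟩ :=
    walk_dedup q0.length q0 le_rfl hq02 hq01
  rw [hq03] at hqh
  rw [hq04] at hqlast
  have hchG : q.Chain' G.Adj := hqch.imp (fun {a b} h => (hsk a b).mpr h)
  refine ⟨q, ⟨⟨hqnd, hchG⟩, ?_⟩, hqh, hqlast⟩
  intro a b c ht
  obtain ⟨l1, l2, rfl⟩ := ht
  have hcolG : G.Collider a b c := collider_G_of hG hchG
  refine ⟨fun _ => ?_, fun hn => absurd hcolG hn⟩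
  have hne := interior_ne hqnd hqh hqlast
  have hbmem : b ∈ l1 ++ a :: b :: c :: l2 := by simp
  rcases hq05 b (hqsub b hbmem) with h1 | h1 | h1
  · exact absurd h1 hne.1
  · exact absurd h1 hne.2
  · exact mem_anSet_of_mem h1

end Aux5

/-- An ancestral graph with the same skeleton as a
bi-directed graph `G` is Markov equivalent to `G` iff it has the
boundary containment property. -/
theorem stmt6 {V : Type} (G Gb : MixedGraph V) (hG : G.Bidirected)
    (hGb : Gb.Ancestral) (hsk : G.SameSkeleton Gb) :
    G.MarkovEquiv Gb ↔ Gb.BdContain := by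
  constructor
  · intro hME
    constructor
    · -- undirected edges have equal boundaries
      intro v w hUndir
      by_contra hne
      have key : ∀ v w : V, Gb.Undir v w → ∀ u ∈ Gb.Bd v, u ∉ Gb.Bd w → False := by
        intro v w hU u hu hnu
        have hvw : Gb.Adj v w := Gb.undir_adj hU
        have huw : u ≠ w := fun h => hnu (h ▸ Gb.self_mem_bd w)
        have huv : u ≠ v := by
          rintro rfl
          exact hnu (Gb.adj_mem_bd (Gb.adj_symm hvw))
        have hvu : Gb.Adj v u := by
          rcases MixedGraph.mem_bd.mp hu with h | h
          · exact absurd h huv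
          · exact h
        have hnadj : ¬ Gb.Adj u w := by
          intro h
          exact hnu (Gb.adj_mem_bd (Gb.adj_symm h))
        exact distinguish hME hG hsk hvw hvu huw hnadj
          (fun hc => hGb.2.1 v w hU u hc.1)
      rcases Set.not_subset.mp (fun hss : Gb.Bd v ⊆ Gb.Bd w =>
        hne (Set.Subset.antisymm hss (by
          by_contra hns
          obtain ⟨u, hu, hnu⟩ := Set.not_subset.mp hns
          exact key w v (Gb.undir_symm hUndir) u hu hnu))) with ⟨u, hu, hnu⟩
      exact key v w hUndir u hu hnu
    · -- directed edges have nested boundaries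
      intro v w hDir u hu
      by_contra hnu
      have hvw : Gb.Adj v w := Gb.dir_adj hDir
      have huw : u ≠ w := fun h => hnu (h ▸ Gb.self_mem_bd w)
      have huv : u ≠ v := by
        rintro rfl
        exact hnu (Gb.adj_mem_bd (Gb.adj_symm hvw))
      have hvu : Gb.Adj v u := by
        rcases MixedGraph.mem_bd.mp hu with h | h
        · exact absurd h huv
        · exact h
      have hnadj : ¬ Gb.Adj u w := by
        intro h
        exact hnu (Gb.adj_mem_bd (Gb.adj_symm h))
      refine distinguish hME hG hsk hvw hvu huw hnadj (fun hc => ?_)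
      have : Gb.E w v = EType.arrowFrom := by rw [Gb.symm, hDir]; rfl
      rcases hc.2 with h | h <;> rw [this] at h <;> exact EType.noConfusion h
  · intro hbc v w C hvw hvC hwC
    unfold MixedGraph.MSep
    constructor
    · intro h1 h2
      exact h1 (mconn_Gb_to_G hG hGb hbc hsk h2)
    · intro h1 h2
      exact h1 (mconn_G_to_Gb hG hGb hbc hsk h2)
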